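/- Let θ : ℝ → ℝ be nondecreasing and convex on [0,∞) with θ(0) = 0, differentiable on (0,∞) with θ' ≥ 0 and with θ' extending continuously to 0. Let J be a finite set, p : J → ℝ with p_j > 0, x : J → [0,1], and ε > 0. Suppose h* ≥ 0 satisfies ∑_{j∈J} min(p_j, h*)·x_j = h* (with h* > 0 if ∑_j x_j > 1 and h* = 0 if ∑_j x_j ≤ 1), and let h̄ satisfy h*/(1+ε) < h̄ ≤ h* (when h* = 0 take h̄ = 0). Then (∑_{j: p_j > h*} x_j·( θ(p_j/(1+ε)) − θ(h*/(1+ε)) )) + θ(h*/(1+ε)) ≤ g_θ(x, h̄) ≤ (∑_{j: p_j > h*} x_j·(θ(p_j) − θ(h*))) + θ(h*). In words: the relaxation value of the instance with all job sizes scaled down by 1/(1+ε) is at most g_θ evaluated at any grid point h̄ within a (1+ε) factor below h*, which in turn is at most the true relaxation value f(x). -/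

import Mathlib

/-- The scheduling analogue of `g`:
`g_θ(x, h) = (∑_{j : p_j > h} x_j·(θ(p_j) − θ(h))) + θ(h) + θ'(h)·(∑_j min(p_j, h)·x_j − h)`. -/
noncomputable def gTheta {J : Type*} [Fintype J] (θ θ' : ℝ → ℝ) (p x : J → ℝ) (h : ℝ) : ℝ :=
  (∑ j ∈ Finset.univ.filter (fun j => h < p j), x j * (θ (p j) - θ h)) + θ h
    + θ' h * ((∑ j, min (p j) h * x j) - h)

/-- Convex shift inequality: increments over translated intervals. -/
lemma conv_shift {θ : ℝ → ℝ} (hconv : ConvexOn ℝ (Set.Ici 0) θ)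
    {a a' L : ℝ} (ha' : 0 ≤ a') (haa : a' ≤ a) (hL : 0 ≤ L) :
    θ (a' + L) + θ a ≤ θ a' + θ (a + L) := by
  rcases eq_or_lt_of_le (by linarith : a' ≤ a + L) with hd | hd
  · have hL0 : L = 0 := by linarith
    have : a = a' := by linarith
    subst this; rw [hL0]; simp
  · set d : ℝ := a + L - a' with hdd
    have hd0 : 0 < d := by simp [hdd]; linarith
    set t : ℝ := L / d with ht
    have ht0 : 0 ≤ t := div_nonneg hL hd0.le
    have ht1 : t ≤ 1 := by rw [div_le_one hd0]; linarith
    have htd : t * d = L := div_mul_cancel₀ _ hd0.ne'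
    have h1 := hconv.2 (Set.mem_Ici.2 ha') (Set.mem_Ici.2 (by linarith : (0:ℝ) ≤ a + L))
      (by linarith : 0 ≤ 1 - t) ht0 (by ring)
    have h2 := hconv.2 (Set.mem_Ici.2 ha') (Set.mem_Ici.2 (by linarith : (0:ℝ) ≤ a + L))
      ht0 (by linarith : 0 ≤ 1 - t) (by ring)
    have e1 : (1 - t) • a' + t • (a + L) = a' + L := by
      simp only [smul_eq_mul]; nlinarith [htd]
    have e2 : t • a' + (1 - t) • (a + L) = a := by
      simp only [smul_eq_mul]; nlinarith [htd]
    rw [e1] at h1; rw [e2] at h2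
    simp only [smul_eq_mul] at h1 h2
    nlinarith

/-- Increment comparison for monotone convex functions. -/
lemma incr_le {θ : ℝ → ℝ} (hmono : MonotoneOn θ (Set.Ici 0))
    (hconv : ConvexOn ℝ (Set.Ici 0) θ)
    {a a' b b' : ℝ} (ha' : 0 ≤ a') (haa : a' ≤ a) (hab' : a' ≤ b')
    (hlen : b' - a' ≤ b - a) :
    θ b' - θ a' ≤ θ b - θ a := by
  have hL : 0 ≤ b - a := le_trans (by linarith) hlen
  have h1 : θ b' ≤ θ (a' + (b - a)) := by
    apply hmono (Set.mem_Ici.2 (by linarith)) (Set.mem_Ici.2 (by linarith)) (by linarith)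
  have h2 := conv_shift hconv ha' haa hL
  have : a + (b - a) = b := by ring
  rw [this] at h2
  linarith

/-- discretization lemma for scheduling: with `h*` the water level of `x`
and `h̄` a grid point with `h*/(1+ε) < h̄ ≤ h*` (and `h̄ = 0` when `h* = 0`), the
relaxation value of the instance with job sizes scaled down by `1/(1+ε)` is at most
`g_θ(x, h̄)`, which in turn is at most the true relaxation value `f(x)`. -/
theorem stmt18 {J : Type*} [Fintype J]
    (θ θ' : ℝ → ℝ)
    (hmono : MonotoneOn θ (Set.Ici 0)) (hconv : ConvexOn ℝ (Set.Ici 0) θ) (hθ0 : θ 0 = 0)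
    (hD1 : ∀ t : ℝ, 0 < t → HasDerivAt θ (θ' t) t)
    (hθ'nn : ∀ t : ℝ, 0 < t → 0 ≤ θ' t)
    (hθ'cont : ContinuousOn θ' (Set.Ici 0))
    (p x : J → ℝ) (hp : ∀ j, 0 < p j) (hx : ∀ j, x j ∈ Set.Icc (0 : ℝ) 1)
    (ε : ℝ) (hε : 0 < ε)
    (hstar : ℝ) (hstar0 : 0 ≤ hstar)
    (hwater : ∑ j, min (p j) hstar * x j = hstar)
    (hpos : 1 < ∑ j, x j → 0 < hstar)
    (hzero : ∑ j, x j ≤ 1 → hstar = 0)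
    (hbar : ℝ)
    (hbar_cond : (hstar = 0 ∧ hbar = 0) ∨ (hstar / (1 + ε) < hbar ∧ hbar ≤ hstar)) :
    (∑ j ∈ Finset.univ.filter (fun j => hstar < p j),
        x j * (θ (p j / (1 + ε)) - θ (hstar / (1 + ε)))) + θ (hstar / (1 + ε))
      ≤ gTheta θ θ' p x hbar ∧
    gTheta θ θ' p x hbar ≤
      (∑ j ∈ Finset.univ.filter (fun j => hstar < p j), x j * (θ (p j) - θ hstar))
        + θ hstar := by
  have hε1 : (0:ℝ) < 1 + ε := by linarith
  have hε2 : (1:ℝ) ≤ 1 + ε := by linarith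
  have hxnn : ∀ j, 0 ≤ x j := fun j => (hx j).1
  have conv1 : ∀ h : ℝ, (∑ j ∈ Finset.univ.filter (fun j => h < p j), x j * (θ (p j) - θ h))
      = ∑ j, x j * (θ (max (p j) h) - θ h) := by
    intro h
    rw [Finset.sum_filter]
    refine Finset.sum_congr rfl fun j _ => ?_
    rcases lt_or_ge h (p j) with hc | hc
    · rw [if_pos hc, max_eq_left hc.le]
    · rw [if_neg (not_lt.2 hc), max_eq_right hc]; ring
  rcases hbar_cond with ⟨h0, hb0⟩ | ⟨hb1, hb2⟩
  · -- case hstar = 0, hbar = 0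
    subst h0; subst hb0
    have hmin0 : ∑ j, min (p j) (0:ℝ) * x j = 0 :=
      Finset.sum_eq_zero fun j _ => by rw [min_eq_right (hp j).le]; ring
    have hg : gTheta θ θ' p x 0
        = (∑ j ∈ Finset.univ.filter (fun j => (0:ℝ) < p j), x j * (θ (p j) - θ 0)) + θ 0 := by
      unfold gTheta; rw [hmin0]; ring
    constructor
    · rw [hg, zero_div]
      refine add_le_add_left (Finset.sum_le_sum fun j _ => ?_) _
      refine mul_le_mul_of_nonneg_left (sub_le_sub_right ?_ _) (hxnn j)
      exact hmono (Set.mem_Ici.2 (div_pos (hp j) hε1).le) (Set.mem_Ici.2 (hp j).le)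
        (div_le_self (hp j).le hε2)
    · exact le_of_eq hg
  · -- main case : hstar/(1+ε) < hbar ≤ hstar
    have hbk : 0 ≤ hstar / (1 + ε) := div_nonneg hstar0 hε1.le
    have hbar0 : 0 < hbar := lt_of_le_of_lt hbk hb1
    have hs : 0 < hstar := lt_of_lt_of_le hbar0 hb2
    -- water level sum at hbar is at least hbar
    have Snn : hbar ≤ ∑ j, min (p j) hbar * x j := by
      have key : ∀ j, (hbar / hstar) * (min (p j) hstar * x j) ≤ min (p j) hbar * x j := by
        intro j
        have key' : hbar * min (p j) hstar ≤ hstar * min (p j) hbar := by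
          rcases le_total (p j) hbar with h | h
          · rw [min_eq_left h, min_eq_left (h.trans hb2)]
            exact mul_le_mul_of_nonneg_right hb2 (hp j).le
          · rw [min_eq_right h]
            nlinarith [min_le_right (p j) hstar, hbar0.le]
        have h2 : (hbar / hstar) * min (p j) hstar ≤ min (p j) hbar := by
          rw [div_mul_eq_mul_div, div_le_iff₀ hs]
          nlinarith
        calc (hbar / hstar) * (min (p j) hstar * x j)
            = ((hbar / hstar) * min (p j) hstar) * x j := by ring
          _ ≤ min (p j) hbar * x j := mul_le_mul_of_nonneg_right h2 (hxnn j)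
      calc hbar = (hbar / hstar) * hstar := by field_simp
        _ = (hbar / hstar) * ∑ j, min (p j) hstar * x j := by rw [hwater]
        _ = ∑ j, (hbar / hstar) * (min (p j) hstar * x j) := Finset.mul_sum _ _ _
        _ ≤ ∑ j, min (p j) hbar * x j := Finset.sum_le_sum fun j _ => key j
    have Sdiff : 0 ≤ (∑ j, min (p j) hbar * x j) - hbar := by linarith
    -- slope constant
    set m : ℝ := if hbar < hstar then (θ hstar - θ hbar) / (hstar - hbar) else θ' hbar with hm
    have mΔ : m * (hstar - hbar) = θ hstar - θ hbar := by
      by_cases h : hbar < hstar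
      · rw [hm, if_pos h, div_mul_cancel₀ _ (by intro hh; rw [sub_eq_zero] at hh; exact h.ne' hh)]
      · have he : hbar = hstar := le_antisymm hb2 (not_lt.1 h)
        rw [he]; ring
    have mc : θ' hbar ≤ m := by
      by_cases h : hbar < hstar
      · rw [hm, if_pos h]
        have := hconv.le_slope_of_hasDerivAt (Set.mem_Ici.2 hbar0.le)
          (Set.mem_Ici.2 hstar0) h (hD1 hbar hbar0)
        rwa [slope_def_field] at this
      · rw [hm, if_neg h]
    have msec : ∀ t, hbar < t → t ≤ hstar → θ t - θ hbar ≤ m * (t - hbar) := by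
      intro t h1 h2
      have hlt : hbar < hstar := lt_of_lt_of_le h1 h2
      have hsm := hconv.secant_mono (Set.mem_Ici.2 hbar0.le)
        (Set.mem_Ici.2 (by linarith : (0:ℝ) ≤ t)) (Set.mem_Ici.2 hstar0)
        (by intro hh; rw [hh] at h1; exact lt_irrefl _ h1)
        (by intro hh; rw [hh] at hlt; exact lt_irrefl _ hlt) h2
      rw [hm, if_pos hlt]
      rw [div_le_div_iff₀ (by linarith) (by linarith)] at hsm
      rw [div_mul_eq_mul_div, le_div_iff₀ (by linarith : (0:ℝ) < hstar - hbar)]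
      nlinarith
    constructor
    · -- lower bound
      have conv2 : (∑ j ∈ Finset.univ.filter (fun j => hstar < p j),
          x j * (θ (p j / (1 + ε)) - θ (hstar / (1 + ε))))
          = ∑ j, x j * (θ (max (p j / (1 + ε)) (hstar / (1 + ε))) - θ (hstar / (1 + ε))) := by
        rw [Finset.sum_filter]
        refine Finset.sum_congr rfl fun j _ => ?_
        rcases lt_or_ge hstar (p j) with hc | hc
        · rw [if_pos hc, max_eq_left (by gcongr)]
        · rw [if_neg (not_lt.2 hc), max_eq_right (by gcongr)]; ring
      unfold gTheta
      rw [conv2, conv1 hbar]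
      have tθ : θ (hstar / (1 + ε)) ≤ θ hbar :=
        hmono (Set.mem_Ici.2 hbk) (Set.mem_Ici.2 hbar0.le) hb1.le
      have t3 : 0 ≤ θ' hbar * ((∑ j, min (p j) hbar * x j) - hbar) :=
        mul_nonneg (hθ'nn hbar hbar0) Sdiff
      have keyL : (∑ j, x j * (θ (max (p j / (1 + ε)) (hstar / (1 + ε))) - θ (hstar / (1 + ε))))
          ≤ ∑ j, x j * (θ (max (p j) hbar) - θ hbar) := by
        refine Finset.sum_le_sum fun j _ => ?_
        rcases le_or_gt (p j) hstar with hc | hc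
        · rw [max_eq_right (by gcongr : p j / (1 + ε) ≤ hstar / (1 + ε))]
          simp only [sub_self, mul_zero]
          refine mul_nonneg (hxnn j) (sub_nonneg.2 ?_)
          exact hmono (Set.mem_Ici.2 hbar0.le)
            (Set.mem_Ici.2 (le_trans hbar0.le (le_max_right _ _))) (le_max_right _ _)
        · rw [max_eq_left (by gcongr : hstar / (1 + ε) ≤ p j / (1 + ε)),
            max_eq_left (by linarith : hbar ≤ p j)]
          refine mul_le_mul_of_nonneg_left ?_ (hxnn j)
          have i1 : θ (p j / (1 + ε)) - θ (hstar / (1 + ε)) ≤ θ (p j) - θ hstar := by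
            refine incr_le hmono hconv hbk (div_le_self hstar0 hε2)
              (by gcongr : hstar / (1+ε) ≤ p j / (1+ε)) ?_
            have e : p j / (1 + ε) - hstar / (1 + ε) = (p j - hstar) / (1 + ε) :=
              (sub_div _ _ _).symm
            rw [e]
            exact div_le_self (by linarith) hε2
          have i2 : θ hbar ≤ θ hstar :=
            hmono (Set.mem_Ici.2 hbar0.le) (Set.mem_Ici.2 hstar0) hb2
          linarith
      linarith
    · -- upper bound
      unfold gTheta
      rw [conv1 hbar, conv1 hstar]
      have stepA : θ' hbar * ((∑ j, min (p j) hbar * x j) - hbar)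
          ≤ m * ((∑ j, min (p j) hbar * x j) - hbar) :=
        mul_le_mul_of_nonneg_right mc Sdiff
      have key : (∑ j, (x j * (θ (max (p j) hbar) - θ hbar) + m * (min (p j) hbar * x j)))
          ≤ ∑ j, (x j * (θ (max (p j) hstar) - θ hstar) + m * (min (p j) hstar * x j)) := by
        refine Finset.sum_le_sum fun j _ => ?_
        rcases le_or_gt (p j) hbar with h1 | h1
        · rw [max_eq_right h1, max_eq_right (h1.trans hb2), min_eq_left h1,
            min_eq_left (h1.trans hb2)]
          simp [sub_self]
        · rcases le_or_gt (p j) hstar with h2 | h2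
          · rw [max_eq_left h1.le, max_eq_right h2, min_eq_right h1.le, min_eq_left h2]
            have := msec (p j) h1 h2
            nlinarith [hxnn j]
          · rw [max_eq_left h1.le, max_eq_left h2.le, min_eq_right h1.le,
              min_eq_right h2.le]
            nlinarith [hxnn j, mΔ]
      have e1 : (∑ j, (x j * (θ (max (p j) hbar) - θ hbar) + m * (min (p j) hbar * x j)))
          = (∑ j, x j * (θ (max (p j) hbar) - θ hbar)) + m * ∑ j, min (p j) hbar * x j := by
        rw [Finset.sum_add_distrib, ← Finset.mul_sum]
      have e2 : (∑ j, (x j * (θ (max (p j) hstar) - θ hstar) + m * (min (p j) hstar * x j)))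
          = (∑ j, x j * (θ (max (p j) hstar) - θ hstar)) + m * hstar := by
        rw [Finset.sum_add_distrib, ← Finset.mul_sum, hwater]
      rw [e1, e2] at key
      have mΔ' : m * hstar - m * hbar = θ hstar - θ hbar := by rw [← mul_sub]; exact mΔ
      have stepA' : θ' hbar * ((∑ j, min (p j) hbar * x j) - hbar)
          ≤ m * (∑ j, min (p j) hbar * x j) - m * hbar :=
        stepA.trans (le_of_eq (by ring))
      linarith
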